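/- Fix σ > 0 and finite measures λ, μ₀, μ₁ on a measurable space X, all of total mass V > 0. For a measurable equivalence φ : X → X define the divergence-metric matching functional E(φ) := σ · d_F(φ_*λ, λ)² + d_F(φ_*μ₀, μ₁)², where φ_* denotes pushforward of measures. If η₀ is a measurable equivalence of X with (η₀)_*λ = λ and (η₀)_*μ₀ = μ₀, and η₁ is a measurable equivalence of X with (η₁)_*λ = λ and (η₁)_*μ₁ = μ₁, then E(η₁ ∘ φ) = E(φ) = E(φ ∘ η₀) for every measurable equivalence φ. (This is the degeneracy Lemma for the inexact matching functional in Section 5.) -/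
import Mathlib


open MeasureTheory Real

/-- The Hellinger affinity (Bhattacharyya coefficient) of two finite measures,
computed with respect to the dominating measure `τ = μ + ν`. -/
noncomputable def hellingerAffinity {X : Type*} [MeasurableSpace X] (μ ν : Measure X) : ℝ :=
  ∫ x, Real.sqrt ((μ.rnDeriv (μ + ν) x).toReal * (ν.rnDeriv (μ + ν) x).toReal) ∂(μ + ν)

/-- The Fisher–Rao distance between two measures of equal total mass `V`. -/
noncomputable def fisherRaoDist {X : Type*} [MeasurableSpace X] (V : ℝ)
    (μ ν : Measure X) : ℝ :=
  Real.sqrt V * Real.arccos (hellingerAffinity μ ν / V)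

/-- The divergence-metric inexact matching functional
`E(φ) = σ·d_F(φ_*λ, λ)² + d_F(φ_*μ₀, μ₁)²`. -/
noncomputable def matchingFunctional {X : Type*} [MeasurableSpace X] (σ V : ℝ)
    (lam μ₀ μ₁ : Measure X) (φ : X ≃ᵐ X) : ℝ :=
  σ * (fisherRaoDist V (lam.map φ) lam) ^ 2 +
    (fisherRaoDist V (μ₀.map φ) μ₁) ^ 2

lemma hellingerAffinity_map {X : Type*} [MeasurableSpace X] (μ ν : Measure X)
    [IsFiniteMeasure μ] [IsFiniteMeasure ν] (e : X ≃ᵐ X) :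
    hellingerAffinity (μ.map e) (ν.map e) = hellingerAffinity μ ν := by
  have he : MeasurableEmbedding (e : X → X) := e.measurableEmbedding
  unfold hellingerAffinity
  have hadd : μ.map e + ν.map e = (μ + ν).map e := (Measure.map_add _ _ e.measurable).symm
  rw [hadd, MeasureTheory.integral_map e.measurable.aemeasurable]
  · refine integral_congr_ae ?_
    filter_upwards [he.rnDeriv_map μ (μ + ν), he.rnDeriv_map ν (μ + ν)] with x h1 h2
    rw [h1, h2]
  · exact (Measurable.aestronglyMeasurable
      (((Measure.measurable_rnDeriv _ _).ennreal_toReal.mul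
        (Measure.measurable_rnDeriv _ _).ennreal_toReal).sqrt))

lemma fisherRaoDist_map {X : Type*} [MeasurableSpace X] (V : ℝ) (μ ν : Measure X)
    [IsFiniteMeasure μ] [IsFiniteMeasure ν] (e : X ≃ᵐ X) :
    fisherRaoDist V (μ.map e) (ν.map e) = fisherRaoDist V μ ν := by
  rw [fisherRaoDist, fisherRaoDist, hellingerAffinity_map]

/-- **Degeneracy of the inexact matching functional** (Lemma in Section 5):
`E(η₁ ∘ φ) = E(φ) = E(φ ∘ η₀)` whenever `η₀` preserves `λ` and `μ₀`, and `η₁`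
preserves `λ` and `μ₁`. -/
theorem matchingFunctional_degeneracy
    {X : Type*} [MeasurableSpace X] (σ V : ℝ) (hσ : 0 < σ) (hV : 0 < V)
    (lam μ₀ μ₁ : Measure X)
    [IsFiniteMeasure lam] [IsFiniteMeasure μ₀] [IsFiniteMeasure μ₁]
    (hlam : (lam Set.univ).toReal = V) (hμ₀ : (μ₀ Set.univ).toReal = V)
    (hμ₁ : (μ₁ Set.univ).toReal = V)
    (η₀ η₁ : X ≃ᵐ X)
    (hη₀lam : lam.map η₀ = lam) (hη₀μ₀ : μ₀.map η₀ = μ₀)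
    (hη₁lam : lam.map η₁ = lam) (hη₁μ₁ : μ₁.map η₁ = μ₁) :
    ∀ φ : X ≃ᵐ X,
      matchingFunctional σ V lam μ₀ μ₁ (φ.trans η₁) = matchingFunctional σ V lam μ₀ μ₁ φ ∧
      matchingFunctional σ V lam μ₀ μ₁ φ = matchingFunctional σ V lam μ₀ μ₁ (η₀.trans φ) := by
  intro φ
  have hmap : ∀ (ρ : Measure X) (a b : X ≃ᵐ X), ρ.map (a.trans b) = (ρ.map a).map b := by
    intro ρ a b
    rw [MeasurableEquiv.coe_trans, ← Measure.map_map b.measurable a.measurable]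
  have h1 : fisherRaoDist V (lam.map (φ.trans η₁)) lam = fisherRaoDist V (lam.map φ) lam := by
    haveI : IsFiniteMeasure (lam.map φ) := Measure.isFiniteMeasure_map lam φ
    have h := fisherRaoDist_map V (lam.map φ) lam η₁
    rw [hη₁lam] at h
    rw [hmap]; exact h
  have h2 : fisherRaoDist V (μ₀.map (φ.trans η₁)) μ₁ = fisherRaoDist V (μ₀.map φ) μ₁ := by
    haveI : IsFiniteMeasure (μ₀.map φ) := Measure.isFiniteMeasure_map μ₀ φ
    have h := fisherRaoDist_map V (μ₀.map φ) μ₁ η₁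
    rw [hη₁μ₁] at h
    rw [hmap]; exact h
  constructor
  · unfold matchingFunctional
    rw [h1, h2]
  · unfold matchingFunctional
    rw [hmap, hmap, hη₀lam, hη₀μ₀]
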